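/- Let F be a field of characteristic 0, n a natural number with n ≥ 2, and set g = 1, h = n - 1, q = n (all as elements of F). Define, for families a,b,c,u,v,w,x,y,z : Fin n × Fin n → F (indexed a_{ij}, b_{jk}, c_{ki}, u_{jk}, v_{ki}, w_{ij}, x_{ki}, y_{ij}, z_{jk}), the correction terms T'_0 = ∑_i [((1/h)∑_j a_{ij} + (1/g)∑_k x_{ki})((1/h)∑_j y_{ij} + (1/g)∑_k v_{ki})(g∑_j w_{ij} + h∑_k c_{ki}) + ((q-g)/h²)∑_j a_{ij} ∑_j y_{ij} ∑_j w_{ij} + ((q-h)/g²)∑_k x_{ki} ∑_k v_{ki} ∑_k c_{ki}], with T'_1 and T'_2 defined by the cyclic analogues given in the paper. Then the full trilinear identity holds: ∑_{i,j,k}(a_{ij}b_{jk}c_{ki} + u_{jk}v_{ki}w_{ij} + x_{ki}y_{ij}z_{jk}) = ∑_{i,j,k}[(a_{ij}+u_{jk}+x_{ki})(b_{jk}+v_{ki}+y_{ij})(c_{ki}+w_{ij}+z_{jk}) - a_{ij}v_{ki}z_{jk} - u_{jk}y_{ij}c_{ki} - x_{ki}b_{jk}w_{ij}] + T'_0 +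 T'_1 + T'_2 - ∑_{i,j}(a_{ij} + (1/g)∑_k x_{ki})(y_{ij} + (1/g)∑_k v_{ki})(g·w_{ij} + ∑_k c_{ki}) - ∑_{i,j}(a_{ij} + (1/h)∑_k u_{jk})(y_{ij} + (1/h)∑_k b_{jk})(h·w_{ij} + ∑_k z_{jk}) - ∑_{j,k}(u_{jk} + (1/g)∑_i a_{ij})(b_{jk} + (1/g)∑_i y_{ij})(g·z_{jk} + ∑_i w_{ij}) - ∑_{j,k}(u_{jk} + (1/h)∑_i x_{ki})(b_{jk} + (1/h)∑_i v_{ki})(h·z_{jk} + ∑_i c_{ki}) - ∑_{k,i}(x_{ki} + (1/g)∑_j u_{jk})(v_{ki} + (1/g)∑_j b_{jk})(g·c_{ki} + ∑_j z_{jk}) - ∑_{k,i}(x_{ki} + (1/h)∑_j a_{ij})(v_{ki} + (1/h)∑_j y_{ij})(h·c_{ki} + ∑_j w_{ij}). -/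

import Mathlib

open Finset

/-- Left-hand side of the Laderman–Pan–Sha trilinear identity:
`Trace(ABC + UVW + XYZ)`. -/
def lpsLHS {F : Type*} [Field F] (n : ℕ)
    (a b c u v w x y z : Fin n × Fin n → F) : F :=
  ∑ i : Fin n, ∑ j : Fin n, ∑ k : Fin n,
    (a (i, j) * b (j, k) * c (k, i) + u (j, k) * v (k, i) * w (i, j)
      + x (k, i) * y (i, j) * z (j, k))

/-- Correction term `T'₀` with parameters `g`, `h`, `q`. -/
def lpsT0 {F : Type*} [Field F] (n : ℕ) (g h q : F)
    (a b c u v w x y z : Fin n × Fin n → F) : F :=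
  ∑ i : Fin n,
    (((1 / h) * ∑ j : Fin n, a (i, j) + (1 / g) * ∑ k : Fin n, x (k, i))
        * ((1 / h) * ∑ j : Fin n, y (i, j) + (1 / g) * ∑ k : Fin n, v (k, i))
        * (g * ∑ j : Fin n, w (i, j) + h * ∑ k : Fin n, c (k, i))
      + ((q - g) / h ^ 2) * (∑ j : Fin n, a (i, j)) * (∑ j : Fin n, y (i, j))
          * (∑ j : Fin n, w (i, j))
      + ((q - h) / g ^ 2) * (∑ k : Fin n, x (k, i)) * (∑ k : Fin n, v (k, i))
          * (∑ k : Fin n, c (k, i)))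

/-- Correction term `T'₁` with parameters `g`, `h`, `q`. -/
def lpsT1 {F : Type*} [Field F] (n : ℕ) (g h q : F)
    (a b c u v w x y z : Fin n × Fin n → F) : F :=
  ∑ j : Fin n,
    (((1 / g) * ∑ i : Fin n, a (i, j) + (1 / h) * ∑ k : Fin n, u (j, k))
        * ((1 / g) * ∑ i : Fin n, y (i, j) + (1 / h) * ∑ k : Fin n, b (j, k))
        * (h * ∑ i : Fin n, w (i, j) + g * ∑ k : Fin n, z (j, k))
      + ((q - h) / g ^ 2) * (∑ i : Fin n, a (i, j)) * (∑ i : Fin n, y (i, j))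
          * (∑ i : Fin n, w (i, j))
      + ((q - g) / h ^ 2) * (∑ k : Fin n, u (j, k)) * (∑ k : Fin n, b (j, k))
          * (∑ k : Fin n, z (j, k)))

/-- Correction term `T'₂` with parameters `g`, `h`, `q`. -/
def lpsT2 {F : Type*} [Field F] (n : ℕ) (g h q : F)
    (a b c u v w x y z : Fin n × Fin n → F) : F :=
  ∑ k : Fin n,
    (((1 / h) * ∑ i : Fin n, x (k, i) + (1 / g) * ∑ j : Fin n, u (j, k))
        * ((1 / h) * ∑ i : Fin n, v (k, i) + (1 / g) * ∑ j : Fin n, b (j, k))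
        * (g * ∑ i : Fin n, c (k, i) + h * ∑ j : Fin n, z (j, k))
      + ((q - g) / h ^ 2) * (∑ i : Fin n, x (k, i)) * (∑ i : Fin n, v (k, i))
          * (∑ i : Fin n, c (k, i))
      + ((q - h) / g ^ 2) * (∑ j : Fin n, u (j, k)) * (∑ j : Fin n, b (j, k))
          * (∑ j : Fin n, z (j, k)))

/-- Right-hand side of the Laderman–Pan–Sha trilinear identity (1), with
parameters `g`, `h` and correction parameter `q`. -/
def lpsRHS {F : Type*} [Field F] (n : ℕ) (g h q : F)
    (a b c u v w x y z : Fin n × Fin n → F) : F :=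
  (∑ i : Fin n, ∑ j : Fin n, ∑ k : Fin n,
      ((a (i, j) + u (j, k) + x (k, i)) * (b (j, k) + v (k, i) + y (i, j))
          * (c (k, i) + w (i, j) + z (j, k))
        - a (i, j) * v (k, i) * z (j, k) - u (j, k) * y (i, j) * c (k, i)
        - x (k, i) * b (j, k) * w (i, j)))
    + lpsT0 n g h q a b c u v w x y z
    + lpsT1 n g h q a b c u v w x y z
    + lpsT2 n g h q a b c u v w x y z
    - ∑ i : Fin n, ∑ j : Fin n,
        (a (i, j) + (1 / g) * ∑ k : Fin n, x (k, i))
          * (y (i, j) + (1 / g) * ∑ k : Fin n, v (k, i))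
          * (g * w (i, j) + ∑ k : Fin n, c (k, i))
    - ∑ i : Fin n, ∑ j : Fin n,
        (a (i, j) + (1 / h) * ∑ k : Fin n, u (j, k))
          * (y (i, j) + (1 / h) * ∑ k : Fin n, b (j, k))
          * (h * w (i, j) + ∑ k : Fin n, z (j, k))
    - ∑ j : Fin n, ∑ k : Fin n,
        (u (j, k) + (1 / g) * ∑ i : Fin n, a (i, j))
          * (b (j, k) + (1 / g) * ∑ i : Fin n, y (i, j))
          * (g * z (j, k) + ∑ i : Fin n, w (i, j))
    - ∑ j : Fin n, ∑ k : Fin n,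
        (u (j, k) + (1 / h) * ∑ i : Fin n, x (k, i))
          * (b (j, k) + (1 / h) * ∑ i : Fin n, v (k, i))
          * (h * z (j, k) + ∑ i : Fin n, c (k, i))
    - ∑ k : Fin n, ∑ i : Fin n,
        (x (k, i) + (1 / g) * ∑ j : Fin n, u (j, k))
          * (v (k, i) + (1 / g) * ∑ j : Fin n, b (j, k))
          * (g * c (k, i) + ∑ j : Fin n, z (j, k))
    - ∑ k : Fin n, ∑ i : Fin n,
        (x (k, i) + (1 / h) * ∑ j : Fin n, a (i, j))
          * (v (k, i) + (1 / h) * ∑ j : Fin n, y (i, j))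
          * (h * c (k, i) + ∑ j : Fin n, w (i, j))


section LPSAux
variable {F : Type*} [Field F] {n : ℕ}

private lemma lpsExpand3c (f g₁ h₁ : Fin n → F) (S T c E : F) :
    ∑ j, (f j + S) * (g₁ j + T) * (c * h₁ j + E)
      = c * ∑ j, f j * g₁ j * h₁ j + E * ∑ j, f j * g₁ j
        + (c * T) * ∑ j, f j * h₁ j + (T * E) * ∑ j, f j
        + (c * S) * ∑ j, g₁ j * h₁ j + (S * E) * ∑ j, g₁ j
        + (c * S * T) * ∑ j, h₁ j + (n : F) * (S * T * E) := by
  have e : ∀ j, (f j + S) * (g₁ j + T) * (c * h₁ j + E)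
      = c * (f j * g₁ j * h₁ j) + E * (f j * g₁ j) + (c*T) * (f j * h₁ j)
        + (T*E) * f j + (c*S) * (g₁ j * h₁ j) + (S*E) * g₁ j
        + (c*S*T) * h₁ j + S*T*E := fun j => by ring
  simp only [e, Finset.sum_add_distrib, ← Finset.mul_sum, Finset.sum_const,
    Finset.card_univ, Fintype.card_fin, nsmul_eq_mul]
  ring

private lemma lpsExpand3 (f g₁ h₁ : Fin n → F) (S T E : F) :
    ∑ j, (f j + S) * (g₁ j + T) * (h₁ j + E)
      = ∑ j, f j * g₁ j * h₁ j + E * ∑ j, f j * g₁ j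
        + T * ∑ j, f j * h₁ j + (T * E) * ∑ j, f j
        + S * ∑ j, g₁ j * h₁ j + (S * E) * ∑ j, g₁ j
        + (S * T) * ∑ j, h₁ j + (n : F) * (S * T * E) := by
  have := lpsExpand3c f g₁ h₁ S T 1 E
  simp only [one_mul] at this
  exact this

private lemma lpsGrp [CharZero F] (hn : 2 ≤ n) (p q r s t e : Fin n → Fin n → F) :
    (∑ i : Fin n, ((∑ j, p i j) * (∑ k, t i k * e i k)
        + (∑ j, p i j * r i j) * (∑ k, t i k)
        + (∑ j, p i j * q i j) * (∑ k, e i k)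
        + (∑ j, r i j) * (∑ k, s i k * t i k)
        + (∑ j, q i j) * (∑ k, s i k * e i k)
        + (∑ j, q i j * r i j) * (∑ k, s i k)
        + (n : F) * ∑ k, s i k * t i k * e i k))
    + (∑ i : Fin n, (((1/((n:F)-1)) * ∑ j, p i j + ∑ k, s i k)
          * ((1/((n:F)-1)) * ∑ j, q i j + ∑ k, t i k)
          * ((∑ j, r i j) + ((n:F)-1) * ∑ k, e i k)
        + (((n:F) - 1)/((n:F)-1)^2) * (∑ j, p i j) * (∑ j, q i j) * (∑ j, r i j)
        + ((n:F) - ((n:F)-1)) * (∑ k, s i k) * (∑ k, t i k) * (∑ k, e i k)))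
    - (∑ i : Fin n, ∑ j, (p i j + ∑ k, s i k) * (q i j + ∑ k, t i k)
          * (r i j + ∑ k, e i k))
    - (∑ i : Fin n, ∑ k, (s i k + (1/((n:F)-1)) * ∑ j, p i j)
          * (t i k + (1/((n:F)-1)) * ∑ j, q i j)
          * (((n:F)-1) * e i k + ∑ j, r i j))
    = (∑ i : Fin n, ∑ k, s i k * t i k * e i k)
      - ∑ i : Fin n, ∑ j, p i j * q i j * r i j := by
  have hne : ((n:F) - 1) ≠ 0 :=
    sub_ne_zero.mpr (Nat.cast_ne_one.mpr (by omega))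
  rw [← Finset.sum_sub_distrib, ← Finset.sum_add_distrib, ← Finset.sum_sub_distrib,
    ← Finset.sum_sub_distrib]
  refine Finset.sum_congr rfl fun i _ => ?_
  rw [lpsExpand3 (fun j => p i j) (fun j => q i j) (fun j => r i j)
      (∑ k, s i k) (∑ k, t i k) (∑ k, e i k),
    lpsExpand3c (fun k => s i k) (fun k => t i k) (fun k => e i k)
      ((1/((n:F)-1)) * ∑ j, p i j) ((1/((n:F)-1)) * ∑ j, q i j) ((n:F)-1) (∑ j, r i j)]
  field_simp
  ring

private lemma lpsCgrp (p q r s t e : Fin n → Fin n → F) :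
    ∑ i : Fin n, ∑ j : Fin n, ∑ k : Fin n,
      (p i j * (t i k * e i k) + (p i j * r i j) * t i k + (p i j * q i j) * e i k
        + r i j * (s i k * t i k) + q i j * (s i k * e i k) + (q i j * r i j) * s i k
        + s i k * t i k * e i k)
    = ∑ i : Fin n, ((∑ j, p i j) * (∑ k, t i k * e i k)
        + (∑ j, p i j * r i j) * (∑ k, t i k)
        + (∑ j, p i j * q i j) * (∑ k, e i k)
        + (∑ j, r i j) * (∑ k, s i k * t i k)
        + (∑ j, q i j) * (∑ k, s i k * e i k)
        + (∑ j, q i j * r i j) * (∑ k, s i k)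
        + (n : F) * ∑ k, s i k * t i k * e i k) := by
  refine Finset.sum_congr rfl fun i _ => ?_
  simp only [Finset.sum_add_distrib, ← Finset.sum_mul_sum, Finset.sum_const,
    Finset.card_univ, Fintype.card_fin, nsmul_eq_mul]

private lemma lpsReorder3 (f : Fin n → Fin n → Fin n → F) :
    (∑ i : Fin n, ∑ j : Fin n, ∑ k : Fin n, f i j k)
      = ∑ j : Fin n, ∑ k : Fin n, ∑ i : Fin n, f i j k := by
  rw [Finset.sum_comm]
  exact Finset.sum_congr rfl fun j _ => Finset.sum_comm

end LPSAux

theorem stmt_6 {F : Type*} [Field F] [CharZero F] (n : ℕ) (hn : 2 ≤ n)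
    (g h q : F) (hg : g = 1) (hh : h = (n : F) - 1) (hq : q = (n : F))
    (a b c u v w x y z : Fin n × Fin n → F) :
    lpsLHS n a b c u v w x y z = lpsRHS n g h q a b c u v w x y z := by
  subst hg hh hq
  simp only [lpsLHS, lpsRHS, lpsT0, lpsT1, lpsT2, one_div_one, one_mul, one_pow, div_one]
  have G0 := lpsGrp (F := F) hn (fun i j => a (i, j)) (fun i j => y (i, j))
      (fun i j => w (i, j)) (fun i k => x (k, i)) (fun i k => v (k, i)) (fun i k => c (k, i))
  have G1 := lpsGrp (F := F) hn (fun j k => u (j, k)) (fun j k => b (j, k))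
      (fun j k => z (j, k)) (fun j i => a (i, j)) (fun j i => y (i, j)) (fun j i => w (i, j))
  have G2 := lpsGrp (F := F) hn (fun k i => x (k, i)) (fun k i => v (k, i))
      (fun k i => c (k, i)) (fun k j => u (j, k)) (fun k j => b (j, k)) (fun k j => z (j, k))
  have C0 := lpsCgrp (F := F) (fun i j => a (i, j)) (fun i j => y (i, j))
      (fun i j => w (i, j)) (fun i k => x (k, i)) (fun i k => v (k, i)) (fun i k => c (k, i))
  have C1 := lpsCgrp (F := F) (fun j k => u (j, k)) (fun j k => b (j, k))
      (fun j k => z (j, k)) (fun j i => a (i, j)) (fun j i => y (i, j)) (fun j i => w (i, j))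
  have C2 := lpsCgrp (F := F) (fun k i => x (k, i)) (fun k i => v (k, i))
      (fun k i => c (k, i)) (fun k j => u (j, k)) (fun k j => b (j, k)) (fun k j => z (j, k))
  have R1 := lpsReorder3 (fun i j k =>
    u (j,k) * (y (i,j) * w (i,j)) + u (j,k) * z (j,k) * y (i,j)
      + u (j,k) * b (j,k) * w (i,j) + z (j,k) * (a (i,j) * y (i,j))
      + b (j,k) * (a (i,j) * w (i,j)) + b (j,k) * z (j,k) * a (i,j)
      + a (i,j) * y (i,j) * w (i,j))
  have R2a := lpsReorder3 (fun i j k =>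
    x (k,i) * (b (j,k) * z (j,k)) + x (k,i) * c (k,i) * b (j,k)
      + x (k,i) * v (k,i) * z (j,k) + c (k,i) * (u (j,k) * b (j,k))
      + v (k,i) * (u (j,k) * z (j,k)) + v (k,i) * c (k,i) * u (j,k)
      + u (j,k) * b (j,k) * z (j,k))
  have R2b := lpsReorder3 (fun j k i =>
    x (k,i) * (b (j,k) * z (j,k)) + x (k,i) * c (k,i) * b (j,k)
      + x (k,i) * v (k,i) * z (j,k) + c (k,i) * (u (j,k) * b (j,k))
      + v (k,i) * (u (j,k) * z (j,k)) + v (k,i) * c (k,i) * u (j,k)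
      + u (j,k) * b (j,k) * z (j,k))
  have split : (∑ i : Fin n, ∑ j : Fin n, ∑ k : Fin n,
      ((a (i, j) + u (j, k) + x (k, i)) * (b (j, k) + v (k, i) + y (i, j))
          * (c (k, i) + w (i, j) + z (j, k))
        - a (i, j) * v (k, i) * z (j, k) - u (j, k) * y (i, j) * c (k, i)
        - x (k, i) * b (j, k) * w (i, j)))
      = (∑ i : Fin n, ∑ j : Fin n, ∑ k : Fin n,
          (a (i, j) * b (j, k) * c (k, i) + u (j, k) * v (k, i) * w (i, j)
            + x (k, i) * y (i, j) * z (j, k)))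
        + (∑ i : Fin n, ∑ j : Fin n, ∑ k : Fin n,
            (a (i,j) * (v (k,i) * c (k,i)) + a (i,j) * w (i,j) * v (k,i)
              + a (i,j) * y (i,j) * c (k,i) + w (i,j) * (x (k,i) * v (k,i))
              + y (i,j) * (x (k,i) * c (k,i)) + y (i,j) * w (i,j) * x (k,i)
              + x (k,i) * v (k,i) * c (k,i)))
        + (∑ i : Fin n, ∑ j : Fin n, ∑ k : Fin n,
            (u (j,k) * (y (i,j) * w (i,j)) + u (j,k) * z (j,k) * y (i,j)
              + u (j,k) * b (j,k) * w (i,j) + z (j,k) * (a (i,j) * y (i,j))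
              + b (j,k) * (a (i,j) * w (i,j)) + b (j,k) * z (j,k) * a (i,j)
              + a (i,j) * y (i,j) * w (i,j)))
        + (∑ i : Fin n, ∑ j : Fin n, ∑ k : Fin n,
            (x (k,i) * (b (j,k) * z (j,k)) + x (k,i) * c (k,i) * b (j,k)
              + x (k,i) * v (k,i) * z (j,k) + c (k,i) * (u (j,k) * b (j,k))
              + v (k,i) * (u (j,k) * z (j,k)) + v (k,i) * c (k,i) * u (j,k)
              + u (j,k) * b (j,k) * z (j,k))) := by
    simp only [← Finset.sum_add_distrib]
    exact Finset.sum_congr rfl fun i _ => Finset.sum_congr rfl fun j _ =>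
      Finset.sum_congr rfl fun k _ => by ring
  have hT1 : (∑ j : Fin n,
        ((∑ i : Fin n, a (i, j) + 1 / ((n:F) - 1) * ∑ k : Fin n, u (j, k))
            * (∑ i : Fin n, y (i, j) + 1 / ((n:F) - 1) * ∑ k : Fin n, b (j, k))
            * (((n:F) - 1) * ∑ i : Fin n, w (i, j) + ∑ k : Fin n, z (j, k))
          + ((n:F) - ((n:F) - 1)) * (∑ i : Fin n, a (i, j)) * (∑ i : Fin n, y (i, j))
              * (∑ i : Fin n, w (i, j))
          + (((n:F) - 1) / ((n:F) - 1) ^ 2) * (∑ k : Fin n, u (j, k))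
              * (∑ k : Fin n, b (j, k)) * (∑ k : Fin n, z (j, k))))
      = ∑ j : Fin n,
        ((1 / ((n:F) - 1) * ∑ k : Fin n, u (j, k) + ∑ i : Fin n, a (i, j))
            * (1 / ((n:F) - 1) * ∑ k : Fin n, b (j, k) + ∑ i : Fin n, y (i, j))
            * ((∑ k : Fin n, z (j, k)) + ((n:F) - 1) * ∑ i : Fin n, w (i, j))
          + (((n:F) - 1) / ((n:F) - 1) ^ 2) * (∑ k : Fin n, u (j, k))
              * (∑ k : Fin n, b (j, k)) * (∑ k : Fin n, z (j, k))
          + ((n:F) - ((n:F) - 1)) * (∑ i : Fin n, a (i, j)) * (∑ i : Fin n, y (i, j))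
              * (∑ i : Fin n, w (i, j))) :=
    Finset.sum_congr rfl fun j _ => by ring
  have c2 : (∑ i : Fin n, ∑ j : Fin n,
        (a (i, j) + 1 / ((n:F) - 1) * ∑ k : Fin n, u (j, k))
          * (y (i, j) + 1 / ((n:F) - 1) * ∑ k : Fin n, b (j, k))
          * (((n:F) - 1) * w (i, j) + ∑ k : Fin n, z (j, k)))
      = ∑ j : Fin n, ∑ i : Fin n,
        (a (i, j) + 1 / ((n:F) - 1) * ∑ k : Fin n, u (j, k))
          * (y (i, j) + 1 / ((n:F) - 1) * ∑ k : Fin n, b (j, k))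
          * (((n:F) - 1) * w (i, j) + ∑ k : Fin n, z (j, k)) := Finset.sum_comm
  have c4 : (∑ j : Fin n, ∑ k : Fin n,
        (u (j, k) + 1 / ((n:F) - 1) * ∑ i : Fin n, x (k, i))
          * (b (j, k) + 1 / ((n:F) - 1) * ∑ i : Fin n, v (k, i))
          * (((n:F) - 1) * z (j, k) + ∑ i : Fin n, c (k, i)))
      = ∑ k : Fin n, ∑ j : Fin n,
        (u (j, k) + 1 / ((n:F) - 1) * ∑ i : Fin n, x (k, i))
          * (b (j, k) + 1 / ((n:F) - 1) * ∑ i : Fin n, v (k, i))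
          * (((n:F) - 1) * z (j, k) + ∑ i : Fin n, c (k, i)) := Finset.sum_comm
  have c6 : (∑ k : Fin n, ∑ i : Fin n,
        (x (k, i) + 1 / ((n:F) - 1) * ∑ j : Fin n, a (i, j))
          * (v (k, i) + 1 / ((n:F) - 1) * ∑ j : Fin n, y (i, j))
          * (((n:F) - 1) * c (k, i) + ∑ j : Fin n, w (i, j)))
      = ∑ i : Fin n, ∑ k : Fin n,
        (x (k, i) + 1 / ((n:F) - 1) * ∑ j : Fin n, a (i, j))
          * (v (k, i) + 1 / ((n:F) - 1) * ∑ j : Fin n, y (i, j))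
          * (((n:F) - 1) * c (k, i) + ∑ j : Fin n, w (i, j)) := Finset.sum_comm
  have ca : (∑ i : Fin n, ∑ j : Fin n, a (i, j) * y (i, j) * w (i, j))
      = ∑ j : Fin n, ∑ i : Fin n, a (i, j) * y (i, j) * w (i, j) := Finset.sum_comm
  have cu : (∑ j : Fin n, ∑ k : Fin n, u (j, k) * b (j, k) * z (j, k))
      = ∑ k : Fin n, ∑ j : Fin n, u (j, k) * b (j, k) * z (j, k) := Finset.sum_comm
  have cx : (∑ i : Fin n, ∑ k : Fin n, x (k, i) * v (k, i) * c (k, i))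
      = ∑ k : Fin n, ∑ i : Fin n, x (k, i) * v (k, i) * c (k, i) := Finset.sum_comm
  linear_combination -split - R1 - R2a + R2a - (R2a.trans R2b) - C0 - C1 - C2
    - G0 - G1 - G2 - hT1 + c2 + c4 + c6 + ca + cu - cx
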